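/- There exists d₀ (depending only on ε) such that for all d ≥ d₀, in the setting of the wasteful random colouring procedure with activation probability p, every vertex v ∈ V(G) satisfies P[ |relevant_cols'_lost_deg_v − E[relevant_cols'_lost_deg_v]| > d^{11/6} ] ≤ exp(−d^{1/7}). -/

import Mathlib

open Finset
open scoped Classical

/-- An outcome of the wasteful random colouring procedure: an activation function
`A : V → Bool` and a colouring `ψ : V → W`. -/
abbrev Samp (V W : Type) : Type := (V → Bool) × (V → W)

/-- `H` is a cover graph for `G` via `L`. -/
def IsCoverGraph {V W : Type} (G : SimpleGraph V) (H : SimpleGraph W)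
    (L : V → Finset W) : Prop :=
  (∀ v v' : V, v ≠ v' → Disjoint (L v) (L v')) ∧
  (∀ w : W, ∃ v : V, w ∈ L v) ∧
  (∀ v v' : V, ¬ G.Adj v v' → ∀ c ∈ L v, ∀ c' ∈ L v', ¬ H.Adj c c')

/-- The probability weight of an outcome `ω`: each vertex is activated
independently with probability `p`, and each vertex receives an independent
uniformly random colour from its list. -/
noncomputable def wt {V W : Type} [Fintype V] (L : V → Finset W) (p : ℝ)
    (ω : Samp V W) : ℝ :=
  (∏ v : V, if ω.1 v then p else 1 - p) *
    ∏ v : V, if ω.2 v ∈ L v then (1 : ℝ) / (L v).card else 0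

/-- Probability of an event under the wasteful random colouring procedure. -/
noncomputable def prE {V W : Type} [Fintype V] [Fintype W] [DecidableEq V]
    (L : V → Finset W) (p : ℝ) (E : Samp V W → Prop) : ℝ :=
  ∑ ω : Samp V W, if E ω then wt L p ω else 0

/-- Expectation of a random variable under the wasteful random colouring
procedure. -/
noncomputable def ex {V W : Type} [Fintype V] [Fintype W] [DecidableEq V]
    (L : V → Finset W) (p : ℝ) (X : Samp V W → ℝ) : ℝ :=
  ∑ ω : Samp V W, wt L p ω * X ω

/-- The number of `φ`-useable colours in `L v`, where `φ = ψ|_A`: colours `c ∈ L v`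
such that no activated vertex got a colour `H`-adjacent to `c`. -/
noncomputable def useableCols {V W : Type} [Fintype V] (H : SimpleGraph W)
    (L : V → Finset W) (v : V) (ω : Samp V W) : ℕ :=
  ((L v).filter (fun c => ∀ u : V, ω.1 u = true → ¬ H.Adj c (ω.2 u))).card

/-- `A^col`: activated vertices `v` such that no activated `G`-neighbour received a
colour `H`-adjacent to the colour of `v`. -/
noncomputable def Acol {V W : Type} [Fintype V] (G : SimpleGraph V)
    (H : SimpleGraph W) (ω : Samp V W) : Finset V :=
  Finset.univ.filter (fun v => ω.1 v = true ∧
    ∀ u : V, G.Adj v u → ω.1 u = true → ¬ H.Adj (ω.2 u) (ω.2 v))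

/-- `#coloured_nbrs_{v,c}`: the number of `H`-neighbours of `c` lying in the list
of some vertex of `A^col`. -/
noncomputable def colouredNbrs {V W : Type} [Fintype V] [Fintype W]
    (G : SimpleGraph V) (H : SimpleGraph W) (L : V → Finset W) (c : W)
    (ω : Samp V W) : ℕ :=
  ((Finset.univ.filter (fun c' : W => H.Adj c c')).filter
    (fun c' => ∃ u ∈ Acol G H ω, c' ∈ L u)).card

/-- `relevant_cols'_lost_deg_v`: the total `H`-degree of the relevant colours
(`deg_H(c) ≥ d/(log d)³`) of `L(v)` that are not `φ`-useable. -/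
noncomputable def relLostDeg {V W : Type} [Fintype V] [Fintype W]
    (H : SimpleGraph W) [DecidableRel H.Adj] (L : V → Finset W) (d : ℝ) (v : V)
    (ω : Samp V W) : ℝ :=
  ∑ c ∈ (L v).filter (fun c => d / (Real.log d) ^ 3 ≤ (H.degree c : ℝ) ∧
      ¬ (∀ u : V, ω.1 u = true → ¬ H.Adj c (ω.2 u))), (H.degree c : ℝ)


set_option linter.unusedSectionVars false
set_option maxHeartbeats 1000000

set_option maxHeartbeats 1000000

namespace ConcAux

variable {ι X : Type*} [Fintype ι] [Fintype X] [DecidableEq ι]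

noncomputable def Texp (m : ι → X → ℝ) : List ι → ((ι → X) → ℝ) → (ι → X) → ℝ
  | [], f => f
  | i :: l, f => fun ω => ∑ x : X, m i x * Texp m l f (Function.update ω i x)

variable (m : ι → X → ℝ)

lemma Texp_nil (f : (ι → X) → ℝ) : Texp m [] f = f := rfl

lemma Texp_cons (i : ι) (l : List ι) (f : (ι → X) → ℝ) (ω : ι → X) :
    Texp m (i :: l) f ω = ∑ x : X, m i x * Texp m l f (Function.update ω i x) := rfl

lemma Texp_sub (l : List ι) (f g : (ι → X) → ℝ) (ω : ι → X) :
    Texp m l (fun σ => f σ - g σ) ω = Texp m l f ω - Texp m l g ω := by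
  induction l generalizing f g ω with
  | nil => rfl
  | cons i l ih =>
    simp only [Texp_cons, ih, mul_sub, Finset.sum_sub_distrib]

lemma Texp_abs_le (hm0 : ∀ i x, 0 ≤ m i x) (hm1 : ∀ i, ∑ x : X, m i x = 1)
    (l : List ι) (g : (ι → X) → ℝ) {C : ℝ} (h : ∀ σ, |g σ| ≤ C) (ω : ι → X) :
    |Texp m l g ω| ≤ C := by
  induction l generalizing ω with
  | nil => exact h ω
  | cons i l ih =>
    rw [Texp_cons]
    calc |∑ x : X, m i x * Texp m l g (Function.update ω i x)|
        ≤ ∑ x : X, |m i x * Texp m l g (Function.update ω i x)| :=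
          Finset.abs_sum_le_sum_abs _ _
      _ ≤ ∑ x : X, m i x * C := by
          refine Finset.sum_le_sum fun x _ => ?_
          rw [abs_mul, abs_of_nonneg (hm0 i x)]
          exact mul_le_mul_of_nonneg_left (ih _) (hm0 i x)
      _ = C := by rw [← Finset.sum_mul, hm1 i, one_mul]

lemma Texp_update (l : List ι) (f : (ι → X) → ℝ) (i : ι) (hi : i ∉ l) (x : X)
    (ω : ι → X) :
    Texp m l (fun σ => f (Function.update σ i x)) ω = Texp m l f (Function.update ω i x) := by
  induction l generalizing ω with
  | nil => rfl
  | cons j l ih =>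
    have hij : j ≠ i := fun h => hi (h ▸ (List.mem_cons_self : j ∈ j :: l))
    have hi' : i ∉ l := fun h => hi (List.mem_cons_of_mem _ h)
    simp only [Texp_cons]
    refine Finset.sum_congr rfl fun y _ => ?_
    rw [ih hi', Function.update_comm hij]

/-- auxiliary weight for the explicit-sum formula -/
noncomputable def wfun (l : List ι) (ω : ι → X) (i : ι) (x : X) : ℝ :=
  if i ∈ l then m i x else (if x = ω i then 1 else 0)

lemma Texp_eq_sum_aux (l : List ι) (hl : l.Nodup) (f : (ι → X) → ℝ) (ω : ι → X) :
    Texp m l f ω = ∑ σ : ι → X, (∏ i : ι, wfun m l ω i (σ i)) * f σ := by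
  induction l generalizing ω with
  | nil =>
    rw [Texp_nil]
    have h1 : ∀ σ : ι → X, (∏ i : ι, wfun m [] ω i (σ i)) = if σ = ω then 1 else 0 := by
      intro σ
      by_cases h : σ = ω
      · subst h; simp [wfun]
      · obtain ⟨i, hi⟩ := Function.ne_iff.1 h
        rw [if_neg h]
        refine Finset.prod_eq_zero (Finset.mem_univ i) ?_
        simp [wfun, hi]
    simp only [h1]
    rw [Finset.sum_eq_single ω (by intro b _ hb; simp [hb]) (by simp)]
    simp
  | cons i l ih =>
    have hi : i ∉ l := (List.nodup_cons.1 hl).1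
    have hl' : l.Nodup := (List.nodup_cons.1 hl).2
    rw [Texp_cons]
    simp only [ih hl']
    simp only [Finset.mul_sum]
    rw [Finset.sum_comm]
    refine Finset.sum_congr rfl fun σ _ => ?_
    have key : ∀ x : X, (∏ j : ι, wfun m l (Function.update ω i x) j (σ j))
        = (if σ i = x then (1:ℝ) else 0) *
          ∏ j ∈ Finset.univ.erase i, wfun m (i :: l) ω j (σ j) := by
      intro x
      rw [← Finset.mul_prod_erase Finset.univ _ (Finset.mem_univ i)]
      congr 1
      · simp [wfun, hi]
      · refine Finset.prod_congr rfl fun j hj => ?_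
        have hj' : j ≠ i := Finset.ne_of_mem_erase hj
        simp [wfun, Function.update_of_ne hj', List.mem_cons, hj']
    simp only [key]
    rw [← Finset.mul_prod_erase Finset.univ _ (Finset.mem_univ i)]
    have hwi : wfun m (i :: l) ω i (σ i) = m i (σ i) := by
      simp [wfun]
    rw [hwi]
    rw [Finset.sum_eq_single (σ i)]
    · simp [mul_assoc]
    · intro b _ hb
      simp [Ne.symm hb]
    · simp



lemma exp_le_quad {y : ℝ} (hy : |y| ≤ 1) : Real.exp y ≤ 1 + y + y ^ 2 := by
  have h := Real.exp_bound hy (n := 2) (by norm_num)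
  have h2 : ∑ i ∈ Finset.range 2, y ^ i / (Nat.factorial i) = 1 + y := by
    simp [Finset.sum_range_succ]
  rw [h2] at h
  have h3 := (abs_le.1 h).2
  have h4 : |y| ^ 2 * ((2 : ℕ).succ / ((Nat.factorial 2 : ℝ) * 2)) ≤ y ^ 2 := by
    rw [sq_abs]
    have : ((2:ℕ).succ / ((Nat.factorial 2 : ℝ) * 2)) = 3 / 4 := by
      norm_num [Nat.factorial]
    rw [this]
    nlinarith [sq_nonneg y]
  linarith



lemma step_mgf (mm g φ : X → ℝ) (x₀ : X)
    (hm0 : ∀ x, 0 ≤ mm x) (hm1 : ∑ x : X, mm x = 1)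
    (b t : ℝ)
    (hg : ∀ x, |φ x - φ x₀| ≤ g x) (hgb : ∀ x, g x ≤ b)
    (ht : 0 ≤ t) (htb : t * (2 * b) ≤ 1) :
    ∑ x : X, mm x * Real.exp (t * φ x) ≤
      Real.exp (t * (∑ x : X, mm x * φ x) + t ^ 2 * ∑ x : X, mm x * g x ^ 2) := by
  have hg0 : ∀ x, 0 ≤ g x := fun x => (abs_nonneg _).trans (hg x)
  have hXne : (Finset.univ : Finset X).Nonempty := by
    by_contra h
    rw [Finset.not_nonempty_iff_eq_empty] at h
    rw [h] at hm1
    simp at hm1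
  obtain ⟨x₁, -⟩ := hXne
  have hb0 : 0 ≤ b := (hg0 x₁).trans (hgb x₁)
  set μ := ∑ x : X, mm x * φ x with hμ
  have hgbar : ∑ x : X, mm x * g x ≤ b := by
    calc ∑ x : X, mm x * g x ≤ ∑ x : X, mm x * b :=
          Finset.sum_le_sum fun x _ => mul_le_mul_of_nonneg_left (hgb x) (hm0 x)
      _ = b := by rw [← Finset.sum_mul, hm1, one_mul]
  have hdev : ∀ x, |φ x - μ| ≤ g x + b := by
    intro x
    have h1 : φ x - μ = ∑ y : X, mm y * (φ x - φ y) := by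
      simp only [mul_sub, Finset.sum_sub_distrib, ← Finset.sum_mul, hm1, one_mul, hμ]
    rw [h1]
    calc |∑ y : X, mm y * (φ x - φ y)| ≤ ∑ y : X, |mm y * (φ x - φ y)| :=
          Finset.abs_sum_le_sum_abs _ _
      _ ≤ ∑ y : X, mm y * (g x + g y) := by
          refine Finset.sum_le_sum fun y _ => ?_
          rw [abs_mul, abs_of_nonneg (hm0 y)]
          refine mul_le_mul_of_nonneg_left ?_ (hm0 y)
          calc |φ x - φ y| = |(φ x - φ x₀) - (φ y - φ x₀)| := by ring_nf
            _ ≤ |φ x - φ x₀| + |φ y - φ x₀| := abs_sub _ _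
            _ ≤ g x + g y := add_le_add (hg x) (hg y)
      _ = g x + ∑ y : X, mm y * g y := by
          simp only [mul_add, Finset.sum_add_distrib, ← Finset.sum_mul, hm1, one_mul]
      _ ≤ g x + b := by linarith
  have hyt : ∀ x, |t * (φ x - μ)| ≤ 1 := by
    intro x
    rw [abs_mul, abs_of_nonneg ht]
    calc t * |φ x - μ| ≤ t * (g x + b) := mul_le_mul_of_nonneg_left (hdev x) ht
      _ ≤ t * (2 * b) := by
          have := hgb x
          nlinarith
      _ ≤ 1 := htb
  -- variance bound
  have hvar : ∑ x : X, mm x * (φ x - μ) ^ 2 ≤ ∑ x : X, mm x * g x ^ 2 := by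
    have expand : ∀ x, mm x * (φ x - φ x₀) ^ 2 =
        mm x * (φ x - μ) ^ 2 + (μ - φ x₀) ^ 2 * mm x
          + 2 * (μ - φ x₀) * (mm x * φ x - μ * mm x) := by
      intro x; ring
    have hsum0 : ∑ x : X, (mm x * φ x - μ * mm x) = 0 := by
      rw [Finset.sum_sub_distrib, ← Finset.mul_sum, hm1, mul_one, hμ, sub_self]
    have hident : ∑ x : X, mm x * (φ x - φ x₀) ^ 2 =
        (∑ x : X, mm x * (φ x - μ) ^ 2) + (μ - φ x₀) ^ 2 := by
      simp only [expand, Finset.sum_add_distrib]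
      rw [← Finset.mul_sum, ← Finset.mul_sum, hsum0, hm1]
      ring
    have h1 : ∑ x : X, mm x * (φ x - μ) ^ 2 ≤ ∑ x : X, mm x * (φ x - φ x₀) ^ 2 := by
      rw [hident]
      nlinarith [sq_nonneg (μ - φ x₀)]
    refine h1.trans (Finset.sum_le_sum fun x _ => ?_)
    refine mul_le_mul_of_nonneg_left ?_ (hm0 x)
    calc (φ x - φ x₀) ^ 2 = |φ x - φ x₀| ^ 2 := (sq_abs _).symm
      _ ≤ g x ^ 2 := by
          have := hg x
          nlinarith [abs_nonneg (φ x - φ x₀)]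
  have hmean0 : ∑ x : X, mm x * (φ x - μ) = 0 := by
    simp only [mul_sub, Finset.sum_sub_distrib, ← Finset.sum_mul, hm1, one_mul]
    simp [hμ]
  calc ∑ x : X, mm x * Real.exp (t * φ x)
      = Real.exp (t * μ) * ∑ x : X, mm x * Real.exp (t * (φ x - μ)) := by
        rw [Finset.mul_sum]
        refine Finset.sum_congr rfl fun x _ => ?_
        rw [← mul_assoc, mul_comm (Real.exp (t * μ)) (mm x), mul_assoc, ← Real.exp_add]
        ring_nf
    _ ≤ Real.exp (t * μ) * (1 + t ^ 2 * ∑ x : X, mm x * g x ^ 2) := by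
        refine mul_le_mul_of_nonneg_left ?_ (Real.exp_nonneg _)
        calc ∑ x : X, mm x * Real.exp (t * (φ x - μ))
            ≤ ∑ x : X, mm x * (1 + t * (φ x - μ) + (t * (φ x - μ)) ^ 2) :=
              Finset.sum_le_sum fun x _ =>
                mul_le_mul_of_nonneg_left (exp_le_quad (hyt x)) (hm0 x)
          _ = 1 + t * (∑ x : X, mm x * (φ x - μ))
                + t ^ 2 * ∑ x : X, mm x * (φ x - μ) ^ 2 := by
              have e1 : ∀ x : X, mm x * (1 + t * (φ x - μ) + (t * (φ x - μ)) ^ 2)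
                  = mm x + t * (mm x * (φ x - μ)) + t ^ 2 * (mm x * (φ x - μ) ^ 2) :=
                fun x => by ring
              simp only [e1, Finset.sum_add_distrib, ← Finset.mul_sum, hm1]
          _ ≤ 1 + t ^ 2 * ∑ x : X, mm x * g x ^ 2 := by
              rw [hmean0]
              have := mul_le_mul_of_nonneg_left hvar (sq_nonneg t)
              linarith
    _ ≤ Real.exp (t * μ) * Real.exp (t ^ 2 * ∑ x : X, mm x * g x ^ 2) := by
        refine mul_le_mul_of_nonneg_left ?_ (Real.exp_nonneg _)
        have := Real.add_one_le_exp (t ^ 2 * ∑ x : X, mm x * g x ^ 2)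
        linarith
    _ = Real.exp (t * μ + t ^ 2 * ∑ x : X, mm x * g x ^ 2) := (Real.exp_add _ _).symm


end ConcAux

namespace ConcAux

variable {ι X : Type*} [Fintype ι] [Fintype X] [DecidableEq ι]
variable (m : ι → X → ℝ)

lemma Texp_const (hm1 : ∀ i, ∑ x : X, m i x = 1) (l : List ι) (c : ℝ) (ω : ι → X) :
    Texp m l (fun _ => c) ω = c := by
  induction l generalizing ω with
  | nil => rfl
  | cons i l ih =>
    rw [Texp_cons]
    simp only [ih]
    rw [← Finset.sum_mul, hm1, one_mul]

lemma Texp_neg (hm1 : ∀ i, ∑ x : X, m i x = 1) (l : List ι) (f : (ι → X) → ℝ)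
    (ω : ι → X) : Texp m l (fun σ => -f σ) ω = -Texp m l f ω := by
  have h := Texp_sub m l (fun _ => (0 : ℝ)) f ω
  simp only [zero_sub] at h
  rw [h, Texp_const m hm1, zero_sub]

lemma Texp_eq_sum (l : List ι) (hl : l.Nodup) (hfull : ∀ i, i ∈ l)
    (f : (ι → X) → ℝ) (ω : ι → X) :
    Texp m l f ω = ∑ σ : ι → X, (∏ i : ι, m i (σ i)) * f σ := by
  rw [Texp_eq_sum_aux m l hl]
  refine Finset.sum_congr rfl fun σ _ => ?_
  congr 1
  exact Finset.prod_congr rfl fun i _ => by simp [wfun, hfull i]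

lemma star (hm0 : ∀ i x, 0 ≤ m i x) (hm1 : ∀ i, ∑ x : X, m i x = 1)
    (g : ι → X → ℝ) (x₀ : ι → X) (b t : ℝ)
    (ht : 0 ≤ t) (htb : t * (2 * b) ≤ 1) (hgb : ∀ i x, g i x ≤ b)
    (f : (ι → X) → ℝ)
    (hf : ∀ (i : ι) (σ : ι → X) (x : X),
      |f (Function.update σ i x) - f (Function.update σ i (x₀ i))| ≤ g i x)
    (l : List ι) (hl : l.Nodup) (ω : ι → X) :
    Texp m l (fun σ => Real.exp (t * f σ)) ω ≤
      Real.exp (t * Texp m l f ω +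
        t ^ 2 * (l.map (fun i => ∑ x : X, m i x * g i x ^ 2)).sum) := by
  induction l generalizing ω with
  | nil => simp [Texp_nil]
  | cons i l ih =>
    have hi : i ∉ l := (List.nodup_cons.1 hl).1
    have hl' : l.Nodup := (List.nodup_cons.1 hl).2
    set Vl := (l.map (fun i => ∑ x : X, m i x * g i x ^ 2)).sum with hVl
    set φ : X → ℝ := fun x => Texp m l f (Function.update ω i x) with hφ
    have hgφ : ∀ x : X, |φ x - φ (x₀ i)| ≤ g i x := by
      intro x
      rw [hφ]
      simp only
      rw [← Texp_update m l f i hi x ω, ← Texp_update m l f i hi (x₀ i) ω,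
        ← Texp_sub]
      exact Texp_abs_le m hm0 hm1 l _ (fun σ => hf i σ x) ω
    calc Texp m (i :: l) (fun σ => Real.exp (t * f σ)) ω
        = ∑ x : X, m i x * Texp m l (fun σ => Real.exp (t * f σ))
            (Function.update ω i x) := rfl
      _ ≤ ∑ x : X, m i x * (Real.exp (t * φ x + t ^ 2 * Vl)) := by
          refine Finset.sum_le_sum fun x _ => ?_
          exact mul_le_mul_of_nonneg_left (ih hl' _) (hm0 i x)
      _ = Real.exp (t ^ 2 * Vl) * ∑ x : X, m i x * Real.exp (t * φ x) := by
          rw [Finset.mul_sum]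
          refine Finset.sum_congr rfl fun x _ => ?_
          rw [Real.exp_add]
          ring
      _ ≤ Real.exp (t ^ 2 * Vl) *
          Real.exp (t * (∑ x : X, m i x * φ x) + t ^ 2 * ∑ x : X, m i x * g i x ^ 2) := by
          refine mul_le_mul_of_nonneg_left ?_ (Real.exp_nonneg _)
          exact step_mgf (m i) (g i) φ (x₀ i) (hm0 i) (hm1 i) b t hgφ (hgb i) ht htb
      _ = Real.exp (t * Texp m (i :: l) f ω +
            t ^ 2 * ((i :: l).map (fun i => ∑ x : X, m i x * g i x ^ 2)).sum) := by
          rw [← Real.exp_add, List.map_cons, List.sum_cons]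
          congr 1
          rw [Texp_cons]
          ring

lemma tail_bound (hm0 : ∀ i x, 0 ≤ m i x) (hm1 : ∀ i, ∑ x : X, m i x = 1)
    (g : ι → X → ℝ) (x₀ : ι → X) (b t lam : ℝ)
    (ht : 0 ≤ t) (htb : t * (2 * b) ≤ 1) (hgb : ∀ i x, g i x ≤ b)
    (f : (ι → X) → ℝ)
    (hf : ∀ (i : ι) (σ : ι → X) (x : X),
      |f (Function.update σ i x) - f (Function.update σ i (x₀ i))| ≤ g i x)
    (l : List ι) (hl : l.Nodup) (hfull : ∀ i, i ∈ l) (ω₀ : ι → X) :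
    ∑ σ : ι → X, (if lam < |f σ - Texp m l f ω₀| then (∏ i : ι, m i (σ i)) else 0)
      ≤ 2 * Real.exp (-(t * lam) +
          t ^ 2 * (l.map (fun i => ∑ x : X, m i x * g i x ^ 2)).sum) := by
  set μ := Texp m l f ω₀ with hμ
  set Vl := (l.map (fun i => ∑ x : X, m i x * g i x ^ 2)).sum with hVl
  have hW0 : ∀ σ : ι → X, 0 ≤ ∏ i : ι, m i (σ i) :=
    fun σ => Finset.prod_nonneg fun i _ => hm0 i (σ i)
  have hneg : ∀ (i : ι) (σ : ι → X) (x : X),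
      |(fun σ => -f σ) (Function.update σ i x) -
        (fun σ => -f σ) (Function.update σ i (x₀ i))| ≤ g i x := by
    intro i σ x
    simp only
    rw [← abs_neg]
    convert hf i σ x using 2
    ring
  have key1 : ∑ σ : ι → X, (∏ i : ι, m i (σ i)) * Real.exp (t * (f σ - μ - lam))
      ≤ Real.exp (-(t * lam) + t ^ 2 * Vl) := by
    have e1 : ∀ σ : ι → X, (∏ i : ι, m i (σ i)) * Real.exp (t * (f σ - μ - lam))
        = Real.exp (-(t * (μ + lam))) * ((∏ i : ι, m i (σ i)) * Real.exp (t * f σ)) := by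
      intro σ
      rw [show t * (f σ - μ - lam) = -(t * (μ + lam)) + t * f σ by ring, Real.exp_add]
      ring
    simp only [e1]
    rw [← Finset.mul_sum]
    rw [← Texp_eq_sum m l hl hfull (fun σ => Real.exp (t * f σ)) ω₀]
    calc Real.exp (-(t * (μ + lam))) * Texp m l (fun σ => Real.exp (t * f σ)) ω₀
        ≤ Real.exp (-(t * (μ + lam))) * Real.exp (t * μ + t ^ 2 * Vl) := by
          refine mul_le_mul_of_nonneg_left ?_ (Real.exp_nonneg _)
          exact star m hm0 hm1 g x₀ b t ht htb hgb f hf l hl ω₀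
      _ = Real.exp (-(t * lam) + t ^ 2 * Vl) := by
          rw [← Real.exp_add]
          ring_nf
  have key2 : ∑ σ : ι → X, (∏ i : ι, m i (σ i)) * Real.exp (t * (μ - f σ - lam))
      ≤ Real.exp (-(t * lam) + t ^ 2 * Vl) := by
    have e1 : ∀ σ : ι → X, (∏ i : ι, m i (σ i)) * Real.exp (t * (μ - f σ - lam))
        = Real.exp (t * (μ - lam)) * ((∏ i : ι, m i (σ i)) * Real.exp (t * (-f σ))) := by
      intro σ
      rw [show t * (μ - f σ - lam) = t * (μ - lam) + t * (-f σ) by ring, Real.exp_add]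
      ring
    simp only [e1]
    rw [← Finset.mul_sum]
    rw [← Texp_eq_sum m l hl hfull (fun σ => Real.exp (t * (-f σ))) ω₀]
    have hstar := star m hm0 hm1 g x₀ b t ht htb hgb (fun σ => -f σ) hneg l hl ω₀
    rw [Texp_neg m hm1] at hstar
    calc Real.exp (t * (μ - lam)) * Texp m l (fun σ => Real.exp (t * -f σ)) ω₀
        ≤ Real.exp (t * (μ - lam)) * Real.exp (t * -μ + t ^ 2 * Vl) := by
          refine mul_le_mul_of_nonneg_left ?_ (Real.exp_nonneg _)
          exact hstar
      _ = Real.exp (-(t * lam) + t ^ 2 * Vl) := by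
          rw [← Real.exp_add]
          ring_nf
  calc ∑ σ : ι → X, (if lam < |f σ - μ| then (∏ i : ι, m i (σ i)) else 0)
      ≤ ∑ σ : ι → X, ((∏ i : ι, m i (σ i)) * Real.exp (t * (f σ - μ - lam))
          + (∏ i : ι, m i (σ i)) * Real.exp (t * (μ - f σ - lam))) := by
        refine Finset.sum_le_sum fun σ _ => ?_
        by_cases hc : lam < |f σ - μ|
        · rw [if_pos hc]
          rcases lt_abs.1 hc with h | h
          · have h1 : (1 : ℝ) ≤ Real.exp (t * (f σ - μ - lam)) :=
              Real.one_le_exp (mul_nonneg ht (by linarith))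
            nlinarith [hW0 σ, Real.exp_nonneg (t * (μ - f σ - lam))]
          · have h1 : (1 : ℝ) ≤ Real.exp (t * (μ - f σ - lam)) :=
              Real.one_le_exp (mul_nonneg ht (by linarith))
            nlinarith [hW0 σ, Real.exp_nonneg (t * (f σ - μ - lam))]
        · rw [if_neg hc]
          have := hW0 σ
          positivity
    _ = (∑ σ : ι → X, (∏ i : ι, m i (σ i)) * Real.exp (t * (f σ - μ - lam)))
        + ∑ σ : ι → X, (∏ i : ι, m i (σ i)) * Real.exp (t * (μ - f σ - lam)) :=
        Finset.sum_add_distrib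
    _ ≤ 2 * Real.exp (-(t * lam) + t ^ 2 * Vl) := by linarith

end ConcAux

section MainProof

open ConcAux

/-- Concentration of the lost degree of relevant colours: for `d` sufficiently
large (depending only on `ε`),
`P[|relevant_cols'_lost_deg_v − E[…]| > d^{11/6}] ≤ exp(−d^{1/7})`. -/
theorem relevant_lost_deg_concentration (ε : ℝ) (hε : 0 < ε) :
    ∃ d₀ : ℝ, ∀ d : ℝ, d₀ ≤ d → 1 ≤ d →
      ∀ (V W : Type) [Fintype V] [Fintype W] [DecidableEq V] [DecidableEq W]
        (Λ : ℕ), (1 + ε) * d ≤ (Λ : ℝ) → (Λ : ℝ) ≤ 4 * d + 1 →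
      ∀ (p : ℝ), 1 / (Real.log d) ^ 2 ≤ p → p ≤ 1 / Real.log d →
      ∀ (G : SimpleGraph V) (H : SimpleGraph W) [DecidableRel H.Adj]
        (L : V → Finset W),
        IsCoverGraph G H L →
        (∀ v : V, (L v).card = Λ) →
        (∀ v : V, ∑ c ∈ L v, (H.degree c : ℝ) ≤ d * Λ) →
        (∀ c : W, (H.degree c : ℝ) ≤ d * Real.log d) →
        (∀ v v' : V, G.Adj v v' → ∀ c ∈ L v,
          (((L v').filter (fun c' => H.Adj c c')).card : ℝ) ≤ d ^ ((1 : ℝ) / 4)) →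
        (∀ v v' : V, G.Adj v v' → ∃ c ∈ L v, ∃ c' ∈ L v', H.Adj c c') →
        ∀ v : V,
        prE L p (fun ω => d ^ ((11 : ℝ) / 6) <
            |relLostDeg H L d v ω - ex L p (relLostDeg H L d v)|)
          ≤ Real.exp (-(d ^ ((1 : ℝ) / 7))) := by
  refine ⟨(800 : ℝ) ^ 4, ?_⟩
  intro d hd800 hd1 V W _ _ _ _ Λ hΛl hΛu p hpl hpu G H _ L hcov hcard havg hdeg hmu hedge v
  -- basic facts about d, p, Λ
  have hd0 : (0 : ℝ) < d := lt_of_lt_of_le one_pos hd1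
  have hdth : (3 : ℝ) ≤ d := le_trans (by norm_num) hd800
  have hlog1 : 1 ≤ Real.log d := by
    rw [Real.le_log_iff_exp_le hd0]
    calc Real.exp 1 ≤ 2.7182818286 := le_of_lt Real.exp_one_lt_d9
      _ ≤ d := le_trans (by norm_num) hdth
  have hlogpos : 0 < Real.log d := lt_of_lt_of_le one_pos hlog1
  have hp0 : 0 < p := lt_of_lt_of_le (by positivity) hpl
  have hp1 : p ≤ 1 := hpu.trans ((div_le_one hlogpos).2 hlog1)
  have hplog : p * Real.log d ≤ 1 := by
    have := (le_div_iff₀ hlogpos).1 hpu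
    linarith
  have hΛpos : (0 : ℝ) < (Λ : ℝ) :=
    lt_of_lt_of_le (by nlinarith) hΛl
  have hΛne : ((Λ : ℕ) : ℝ) ≠ 0 := ne_of_gt hΛpos
  have hΛnat : 0 < Λ := by exact_mod_cast hΛpos
  obtain ⟨w₀, hw₀⟩ : ∃ w₀, w₀ ∈ L v := by
    have : 0 < (L v).card := by rw [hcard v]; exact hΛnat
    exact Finset.card_pos.1 this
  -- the set of relevant colours of v and colour-weight function
  set Rel : Finset W := (L v).filter (fun c => d / (Real.log d) ^ 3 ≤ (H.degree c : ℝ))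
    with hRel
  set cw : W → ℝ := fun w => ∑ c ∈ Rel.filter (fun c => H.Adj c w), (H.degree c : ℝ)
    with hcwdef
  set b : ℝ := d ^ ((1 : ℝ) / 4) * (d * Real.log d) with hbdef
  have hb0 : 0 < b := by
    have h1 : 0 < d ^ ((1 : ℝ) / 4) := Real.rpow_pos_of_pos hd0 _
    have h2 : 0 < d * Real.log d := mul_pos hd0 hlogpos
    exact mul_pos h1 h2
  set m : V → Bool × W → ℝ := fun u x =>
    (if x.1 then p else 1 - p) * (if x.2 ∈ L u then (1 : ℝ) / ((L u).card : ℝ) else 0)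
    with hmdef
  set g : V → Bool × W → ℝ := fun _ x => if x.1 then cw x.2 else 0 with hgdef
  set x₀ : V → Bool × W := fun _ => (false, w₀) with hx₀def
  set eqv : (V → Bool × W) ≃ Samp V W :=
    ⟨fun σ => (fun u => (σ u).1, fun u => (σ u).2), fun ω u => (ω.1 u, ω.2 u),
      fun σ => rfl, fun ω => rfl⟩ with heqv
  set f : (V → Bool × W) → ℝ := fun σ => relLostDeg H L d v (eqv σ) with hfdef
  set l : List V := (Finset.univ : Finset V).toList with hldef
  have hlnd : l.Nodup := Finset.nodup_toList _
  have hlfull : ∀ i : V, i ∈ l := fun i => Finset.mem_toList.2 (Finset.mem_univ i)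
  set lam : ℝ := d ^ ((11 : ℝ) / 6) with hlamdef
  set V₀ : ℝ := d ^ (2 : ℝ) * b with hV₀def
  have hV₀0 : 0 < V₀ := mul_pos (Real.rpow_pos_of_pos hd0 _) hb0
  set t : ℝ := lam / (2 * V₀) with htdef
  have hlam0 : 0 < lam := Real.rpow_pos_of_pos hd0 _
  have ht0 : 0 ≤ t := le_of_lt (div_pos hlam0 (by linarith))
  -- weights are a product measure matching wt
  have h_wt : ∀ σ : V → Bool × W, wt L p (eqv σ) = ∏ u : V, m u (σ u) := by
    intro σ
    simp only [heqv, Equiv.coe_fn_mk, wt, hmdef]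
    exact (Finset.prod_mul_distrib).symm
  have h_m0 : ∀ (u : V) (x : Bool × W), 0 ≤ m u x := by
    intro u x
    simp only [hmdef]
    refine mul_nonneg ?_ ?_
    · split <;> linarith
    · split
      · positivity
      · exact le_refl 0
  have h_m1 : ∀ u : V, ∑ x : Bool × W, m u x = 1 := by
    intro u
    have hcardu : ((L u).card : ℝ) = (Λ : ℝ) := by exact_mod_cast congrArg Nat.cast (hcard u)
    have hs : ∑ w : W, (if w ∈ L u then (1 : ℝ) / ((L u).card : ℝ) else 0) = 1 := by
      rw [Finset.sum_ite_mem, Finset.univ_inter, Finset.sum_const, nsmul_eq_mul,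
        mul_one_div, div_self (by rw [hcardu]; exact hΛne)]
    calc ∑ x : Bool × W, m u x
        = ∑ a : Bool, ∑ w : W, m u (a, w) := Fintype.sum_prod_type _
      _ = ∑ a : Bool, (if a then p else 1 - p) := by
          refine Finset.sum_congr rfl fun a _ => ?_
          simp only [hmdef]
          rw [← Finset.mul_sum Finset.univ
            (fun w => if w ∈ L u then (1 : ℝ) / ((L u).card : ℝ) else 0)
            (if a = true then p else 1 - p), hs, mul_one]
      _ = 1 := by simp
  -- formula for f
  have h_form : ∀ τ : V → Bool × W,
      f τ = ∑ c ∈ Rel.filter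
        (fun c => ¬ ∀ u' : V, (τ u').1 = true → ¬ H.Adj c (τ u').2), (H.degree c : ℝ) := by
    intro τ
    simp only [hfdef, relLostDeg, heqv, Equiv.coe_fn_mk, hRel, Finset.filter_filter]
  have h_cw0 : ∀ w : W, 0 ≤ cw w :=
    fun w => Finset.sum_nonneg fun c _ => Nat.cast_nonneg _
  have h_cwb : ∀ w : W, cw w ≤ b := by
    intro w
    obtain ⟨u'', hu''⟩ := hcov.2.1 w
    by_cases hadj : G.Adj u'' v
    · have hcb := hmu u'' v hadj w hu''
      have hsub : Rel.filter (fun c => H.Adj c w) ⊆ (L v).filter (fun c' => H.Adj w c') := by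
        intro c hc
        rw [Finset.mem_filter] at hc
        have hc1 := hc.1
        rw [hRel, Finset.mem_filter] at hc1
        rw [Finset.mem_filter]
        exact ⟨hc1.1, hc.2.symm⟩
      calc cw w = ∑ c ∈ Rel.filter (fun c => H.Adj c w), (H.degree c : ℝ) := by
            simp only [hcwdef]
        _ ≤ ∑ _c ∈ Rel.filter (fun c => H.Adj c w), (d * Real.log d) :=
            Finset.sum_le_sum fun c _ => hdeg c
        _ = ((Rel.filter (fun c => H.Adj c w)).card : ℝ) * (d * Real.log d) := by
            rw [Finset.sum_const, nsmul_eq_mul]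
        _ ≤ d ^ ((1 : ℝ) / 4) * (d * Real.log d) := by
            refine mul_le_mul_of_nonneg_right ?_ (by positivity)
            calc ((Rel.filter (fun c => H.Adj c w)).card : ℝ)
                ≤ (((L v).filter (fun c' => H.Adj w c')).card : ℝ) := by
                  exact_mod_cast Finset.card_le_card hsub
              _ ≤ d ^ ((1 : ℝ) / 4) := hcb
        _ = b := by rw [hbdef]
    · have hnadj : ¬ G.Adj v u'' := fun h => hadj h.symm
      have hempty : Rel.filter (fun c => H.Adj c w) = ∅ := by
        rw [Finset.eq_empty_iff_forall_notMem]
        intro c hc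
        rw [Finset.mem_filter] at hc
        have hcL : c ∈ L v := by
          have hc1 := hc.1
          rw [hRel, Finset.mem_filter] at hc1
          exact hc1.1
        exact hcov.2.2 v u'' hnadj c hcL w hu'' hc.2
      have : cw w = 0 := by
        simp only [hcwdef]
        rw [hempty, Finset.sum_empty]
      rw [this]
      exact hb0.le
  have h_gb : ∀ (u : V) (x : Bool × W), g u x ≤ b := by
    intro u x
    obtain ⟨a, w⟩ := x
    cases a
    · simpa [hgdef] using hb0.le
    · simpa [hgdef] using h_cwb w
  have h_hf : ∀ (u : V) (σ : V → Bool × W) (x : Bool × W),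
      |f (Function.update σ u x) - f (Function.update σ u (x₀ u))| ≤ g u x := by
    intro u σ x
    obtain ⟨a, w⟩ := x
    have hx₀u : x₀ u = (false, w₀) := by simp [hx₀def]
    rw [hx₀u]
    set σ' : V → Bool × W := Function.update σ u (a, w) with hσ'
    set σ₀ : V → Bool × W := Function.update σ u (false, w₀) with hσ₀
    have hσ'u : σ' u = (a, w) := by rw [hσ']; exact Function.update_self _ _ _
    have hσ₀u : σ₀ u = (false, w₀) := by rw [hσ₀]; exact Function.update_self _ _ _
    have hne : ∀ u' : V, u' ≠ u → σ' u' = σ u' ∧ σ₀ u' = σ u' := fun u' h =>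
      ⟨Function.update_of_ne h _ _, Function.update_of_ne h _ _⟩
    have hsub : Rel.filter (fun c => ¬ ∀ u' : V, (σ₀ u').1 = true → ¬ H.Adj c (σ₀ u').2)
        ⊆ Rel.filter (fun c => ¬ ∀ u' : V, (σ' u').1 = true → ¬ H.Adj c (σ' u').2) := by
      intro c hc
      rw [Finset.mem_filter] at hc ⊢
      refine ⟨hc.1, fun hall => hc.2 fun u' h1 => ?_⟩
      by_cases hu : u' = u
      · subst hu
        rw [hσ₀u] at h1
        simp at h1
      · rw [(hne u' hu).2] at h1 ⊢
        have h3 := hall u'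
        rw [(hne u' hu).1] at h3
        exact h3 h1
    cases a with
    | false =>
      have heqf : Rel.filter (fun c => ¬ ∀ u' : V, (σ' u').1 = true → ¬ H.Adj c (σ' u').2)
          = Rel.filter (fun c => ¬ ∀ u' : V, (σ₀ u').1 = true → ¬ H.Adj c (σ₀ u').2) := by
        refine Finset.Subset.antisymm ?_ hsub
        intro c hc
        rw [Finset.mem_filter] at hc ⊢
        refine ⟨hc.1, fun hall => hc.2 fun u' h1 => ?_⟩
        by_cases hu : u' = u
        · subst hu
          rw [hσ'u] at h1
          simp at h1
        · rw [(hne u' hu).1] at h1 ⊢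
          have h3 := hall u'
          rw [(hne u' hu).2] at h3
          exact h3 h1
      rw [h_form σ', h_form σ₀, heqf, sub_self, abs_zero]
      simp [hgdef]
    | true =>
      have hdsub : (Rel.filter (fun c => ¬ ∀ u' : V, (σ' u').1 = true → ¬ H.Adj c (σ' u').2))
          \ (Rel.filter (fun c => ¬ ∀ u' : V, (σ₀ u').1 = true → ¬ H.Adj c (σ₀ u').2))
          ⊆ Rel.filter (fun c => H.Adj c w) := by
        intro c hc
        rw [Finset.mem_sdiff] at hc
        have hc1 := Finset.mem_filter.1 hc.1
        rw [Finset.mem_filter]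
        refine ⟨hc1.1, ?_⟩
        have hW := hc1.2
        push_neg at hW
        obtain ⟨u', h1, h2⟩ := hW
        by_cases hu : u' = u
        · subst hu
          rw [hσ'u] at h2
          exact h2
        · exfalso
          apply hc.2
          rw [Finset.mem_filter]
          refine ⟨hc1.1, fun hall => ?_⟩
          have h3 := hall u'
          rw [(hne u' hu).2] at h3
          rw [(hne u' hu).1] at h1 h2
          exact h3 h1 h2
      have hmono : f σ₀ ≤ f σ' := by
        rw [h_form σ', h_form σ₀]
        exact Finset.sum_le_sum_of_subset_of_nonneg hsub fun c _ _ => Nat.cast_nonneg _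
      rw [abs_of_nonneg (by linarith)]
      have hdiff : f σ' - f σ₀ =
          ∑ c ∈ (Rel.filter (fun c => ¬ ∀ u' : V, (σ' u').1 = true → ¬ H.Adj c (σ' u').2))
            \ (Rel.filter (fun c => ¬ ∀ u' : V, (σ₀ u').1 = true → ¬ H.Adj c (σ₀ u').2)),
            (H.degree c : ℝ) := by
        rw [h_form σ', h_form σ₀, ← Finset.sum_sdiff hsub]
        ring
      rw [hdiff]
      calc ∑ c ∈ (Rel.filter (fun c => ¬ ∀ u' : V, (σ' u').1 = true → ¬ H.Adj c (σ' u').2))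
            \ (Rel.filter (fun c => ¬ ∀ u' : V, (σ₀ u').1 = true → ¬ H.Adj c (σ₀ u').2)),
            (H.degree c : ℝ)
          ≤ ∑ c ∈ Rel.filter (fun c => H.Adj c w), (H.degree c : ℝ) :=
            Finset.sum_le_sum_of_subset_of_nonneg hdsub fun c _ _ => Nat.cast_nonneg _
        _ = cw w := by simp only [hcwdef]
        _ = g u (true, w) := by simp [hgdef]
  -- variance bound
  have h_Vl : (l.map (fun u => ∑ x : Bool × W, m u x * g u x ^ 2)).sum ≤ V₀ := by
    have hsum_l : (l.map (fun u => ∑ x : Bool × W, m u x * g u x ^ 2)).sum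
        = ∑ u : V, ∑ x : Bool × W, m u x * g u x ^ 2 := by
      rw [hldef]
      exact Finset.sum_map_toList _ _
    have hvu : ∀ u : V, ∑ x : Bool × W, m u x * g u x ^ 2
        = p * ∑ w ∈ L u, 1 / (Λ : ℝ) * cw w ^ 2 := by
      intro u
      have hcardu : ((L u).card : ℝ) = (Λ : ℝ) := by exact_mod_cast congrArg Nat.cast (hcard u)
      calc ∑ x : Bool × W, m u x * g u x ^ 2
          = ∑ a : Bool, ∑ w : W, m u (a, w) * g u (a, w) ^ 2 := Fintype.sum_prod_type _
        _ = ∑ w : W, m u (true, w) * cw w ^ 2 := by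
            rw [Fintype.sum_bool]
            have h0 : ∑ w : W, m u (false, w) * g u (false, w) ^ 2 = 0 := by
              refine Finset.sum_eq_zero fun w _ => ?_
              simp [hgdef]
            rw [h0, add_zero]
            refine Finset.sum_congr rfl fun w _ => ?_
            simp [hgdef]
        _ = ∑ w : W, p * ((if w ∈ L u then (1 : ℝ) / ((L u).card : ℝ) else 0) * cw w ^ 2) := by
            refine Finset.sum_congr rfl fun w _ => ?_
            simp only [hmdef]
            simp
            ring
        _ = p * ∑ w ∈ L u, 1 / (Λ : ℝ) * cw w ^ 2 := by
            rw [← Finset.mul_sum Finset.univ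
              (fun w => (if w ∈ L u then (1 : ℝ) / ((L u).card : ℝ) else 0) * cw w ^ 2) p]
            congr 1
            have e1 : ∀ w : W, (if w ∈ L u then (1 : ℝ) / ((L u).card : ℝ) else 0) * cw w ^ 2
                = if w ∈ L u then 1 / (Λ : ℝ) * cw w ^ 2 else 0 := by
              intro w
              by_cases hw : w ∈ L u
              · simp [hw, hcardu]
              · simp [hw]
            simp only [e1]
            rw [Finset.sum_ite_mem, Finset.univ_inter]
    have hpart : ∑ u : V, ∑ w ∈ L u, 1 / (Λ : ℝ) * cw w ^ 2
        = ∑ w : W, 1 / (Λ : ℝ) * cw w ^ 2 := by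
      have hdisj : (↑(Finset.univ : Finset V) : Set V).PairwiseDisjoint L :=
        fun u _ u' _ hne => hcov.1 u u' hne
      rw [← Finset.sum_biUnion hdisj]
      refine Finset.sum_congr ?_ fun _ _ => rfl
      ext w
      simp only [Finset.mem_biUnion, Finset.mem_univ, true_and, iff_true]
      exact hcov.2.1 w
    have hcwsum : ∑ w : W, cw w = ∑ c ∈ Rel, (H.degree c : ℝ) * (H.degree c : ℝ) := by
      calc ∑ w : W, cw w
          = ∑ w : W, ∑ c ∈ Rel, (if H.Adj c w then (H.degree c : ℝ) else 0) := by
            refine Finset.sum_congr rfl fun w _ => ?_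
            simp only [hcwdef]
            exact Finset.sum_filter _ _
        _ = ∑ c ∈ Rel, ∑ w : W, (if H.Adj c w then (H.degree c : ℝ) else 0) :=
            Finset.sum_comm
        _ = ∑ c ∈ Rel, (H.degree c : ℝ) * (H.degree c : ℝ) := by
            refine Finset.sum_congr rfl fun c _ => ?_
            rw [← Finset.sum_filter, Finset.sum_const, nsmul_eq_mul]
            have e2 : Finset.univ.filter (fun w => H.Adj c w) = H.neighborFinset c :=
              (H.neighborFinset_eq_filter).symm
            rw [e2, SimpleGraph.card_neighborFinset_eq_degree]
    have hdeg2 : ∑ c ∈ Rel, (H.degree c : ℝ) * (H.degree c : ℝ)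
        ≤ (d * Real.log d) * (d * (Λ : ℝ)) := by
      calc ∑ c ∈ Rel, (H.degree c : ℝ) * (H.degree c : ℝ)
          ≤ ∑ c ∈ Rel, (d * Real.log d) * (H.degree c : ℝ) :=
            Finset.sum_le_sum fun c _ =>
              mul_le_mul_of_nonneg_right (hdeg c) (Nat.cast_nonneg _)
        _ = (d * Real.log d) * ∑ c ∈ Rel, (H.degree c : ℝ) :=
            (Finset.mul_sum _ _ _).symm
        _ ≤ (d * Real.log d) * ∑ c ∈ L v, (H.degree c : ℝ) := by
            refine mul_le_mul_of_nonneg_left ?_ (by positivity)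
            refine Finset.sum_le_sum_of_subset_of_nonneg ?_ fun c _ _ => Nat.cast_nonneg _
            rw [hRel]
            exact Finset.filter_subset _ _
        _ ≤ (d * Real.log d) * (d * (Λ : ℝ)) :=
            mul_le_mul_of_nonneg_left (havg v) (by positivity)
    have hcw2 : ∑ w : W, cw w ^ 2 ≤ b * ((d * Real.log d) * (d * (Λ : ℝ))) := by
      calc ∑ w : W, cw w ^ 2 ≤ ∑ w : W, b * cw w := by
            refine Finset.sum_le_sum fun w _ => ?_
            have h1 := h_cwb w
            have h2 := h_cw0 w
            nlinarith
        _ = b * ∑ w : W, cw w := (Finset.mul_sum _ _ _).symm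
        _ ≤ b * ((d * Real.log d) * (d * (Λ : ℝ))) := by
            rw [hcwsum]
            exact mul_le_mul_of_nonneg_left hdeg2 hb0.le
    have hcw2nn : (0:ℝ) ≤ ∑ w : W, cw w ^ 2 := Finset.sum_nonneg fun w _ => sq_nonneg _
    have hmain : (l.map (fun u => ∑ x : Bool × W, m u x * g u x ^ 2)).sum
        ≤ p * (1 / (Λ : ℝ)) * (b * ((d * Real.log d) * (d * (Λ : ℝ)))) := by
      rw [hsum_l]
      simp only [hvu]
      rw [← Finset.mul_sum Finset.univ (fun u => ∑ w ∈ L u, 1 / (Λ : ℝ) * cw w ^ 2) p,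
        hpart, ← Finset.mul_sum Finset.univ (fun w => cw w ^ 2) (1 / (Λ : ℝ)), ← mul_assoc]
      exact mul_le_mul_of_nonneg_left hcw2 (by positivity)
    have heqV : p * (1 / (Λ : ℝ)) * (b * ((d * Real.log d) * (d * (Λ : ℝ))))
        = (p * Real.log d) * (b * (d * d)) := by
      field_simp
    have hle : (p * Real.log d) * (b * (d * d)) ≤ 1 * (b * (d * d)) :=
      mul_le_mul_of_nonneg_right hplog (by positivity)
    have hV₀eq2 : V₀ = b * (d * d) := by
      rw [hV₀def]
      have : d ^ (2 : ℝ) = d ^ (2 : ℕ) := by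
        rw [← Real.rpow_natCast d 2]
        norm_num
      rw [this]
      ring
    rw [hV₀eq2]
    calc (l.map (fun u => ∑ x : Bool × W, m u x * g u x ^ 2)).sum
        ≤ p * (1 / (Λ : ℝ)) * (b * ((d * Real.log d) * (d * (Λ : ℝ)))) := hmain
      _ = (p * Real.log d) * (b * (d * d)) := heqV
      _ ≤ 1 * (b * (d * d)) := hle
      _ = b * (d * d) := one_mul _
  -- parameter conditions
  have htb : t * (2 * b) ≤ 1 := by
    rw [htdef, div_mul_eq_mul_div, div_le_one (by linarith)]
    have h1 : lam ≤ d ^ (2 : ℝ) := by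
      rw [hlamdef]
      exact Real.rpow_le_rpow_of_exponent_le hd1 (by norm_num)
    nlinarith
  -- expectation matches Texp
  have h_ex : ex L p (relLostDeg H L d v) = Texp m l f x₀ := by
    rw [ConcAux.Texp_eq_sum m l hlnd hlfull f x₀]
    simp only [ex]
    rw [← Equiv.sum_comp eqv (fun ω => wt L p ω * relLostDeg H L d v ω)]
    refine Finset.sum_congr rfl fun σ _ => ?_
    rw [h_wt σ]
  -- transport of the probability
  have h_prE : prE L p (fun ω => lam <
      |relLostDeg H L d v ω - ex L p (relLostDeg H L d v)|)
      = ∑ σ : V → Bool × W,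
          (if lam < |f σ - Texp m l f x₀| then (∏ u : V, m u (σ u)) else 0) := by
    simp only [prE]
    rw [← Equiv.sum_comp eqv (fun ω => if lam <
      |relLostDeg H L d v ω - ex L p (relLostDeg H L d v)| then wt L p ω else 0)]
    refine Finset.sum_congr rfl fun σ _ => ?_
    rw [h_ex, h_wt σ]
  -- final numeric bound
  have h_num : 2 * Real.exp (-(t * lam) +
      t ^ 2 * (l.map (fun u => ∑ x : Bool × W, m u x * g u x ^ 2)).sum)
      ≤ Real.exp (-(d ^ ((1 : ℝ) / 7))) := by
    have h1 : t ^ 2 * (l.map (fun u => ∑ x : Bool × W, m u x * g u x ^ 2)).sum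
        ≤ t ^ 2 * V₀ := mul_le_mul_of_nonneg_left h_Vl (sq_nonneg t)
    have hE : -(t * lam) + t ^ 2 * V₀ = -(lam ^ 2 / (4 * V₀)) := by
      rw [htdef]
      field_simp
      ring
    have hV₀eq : V₀ = d ^ ((13 : ℝ) / 4) * Real.log d := by
      rw [hV₀def, hbdef]
      have e1 : d ^ (2 : ℝ) * (d ^ ((1 : ℝ) / 4) * (d * Real.log d))
          = d ^ (2 : ℝ) * d ^ ((1 : ℝ) / 4) * d ^ (1 : ℝ) * Real.log d := by
        rw [Real.rpow_one]
        ring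
      rw [e1, ← Real.rpow_add hd0, ← Real.rpow_add hd0]
      norm_num
    have hlam2 : lam ^ 2 = d ^ ((11 : ℝ) / 3) := by
      rw [hlamdef, ← Real.rpow_natCast (d ^ ((11 : ℝ) / 6)) 2, ← Real.rpow_mul hd0.le]
      norm_num
    have hsplit : d ^ ((11 : ℝ) / 3) = d ^ ((13 : ℝ) / 4) * d ^ ((5 : ℝ) / 12) := by
      rw [← Real.rpow_add hd0]
      norm_num
    have h134 : (0 : ℝ) < d ^ ((13 : ℝ) / 4) := Real.rpow_pos_of_pos hd0 _
    have heq : lam ^ 2 / (4 * V₀) = d ^ ((5 : ℝ) / 12) / (4 * Real.log d) := by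
      rw [hlam2, hV₀eq, hsplit]
      field_simp
    have hlogb : Real.log d ≤ 100 * d ^ ((1 : ℝ) / 100) := by
      have h2 := Real.log_le_rpow_div hd0.le (show (0 : ℝ) < 1 / 100 by norm_num)
      calc Real.log d ≤ d ^ ((1 : ℝ) / 100) / (1 / 100) := h2
        _ = 100 * d ^ ((1 : ℝ) / 100) := by ring
    have hd100pos : (0 : ℝ) < d ^ ((1 : ℝ) / 100) := Real.rpow_pos_of_pos hd0 _
    have hstep1 : d ^ ((5 : ℝ) / 12) / (400 * d ^ ((1 : ℝ) / 100))
        ≤ d ^ ((5 : ℝ) / 12) / (4 * Real.log d) := by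
      exact div_le_div_of_nonneg_left (Real.rpow_nonneg hd0.le _) (by linarith)
        (by linarith)
    have hstep2 : d ^ ((61 : ℝ) / 150) / 400
        = d ^ ((5 : ℝ) / 12) / (400 * d ^ ((1 : ℝ) / 100)) := by
      have e3 : d ^ ((5 : ℝ) / 12) = d ^ ((61 : ℝ) / 150) * d ^ ((1 : ℝ) / 100) := by
        rw [← Real.rpow_add hd0]
        norm_num
      rw [e3]
      field_simp
    have hd14 : (800 : ℝ) ≤ d ^ ((1 : ℝ) / 4) := by
      have h800 : (800 : ℝ) = ((800 : ℝ) ^ (4 : ℕ)) ^ ((1 : ℝ) / 4) := by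
        rw [← Real.rpow_natCast (800 : ℝ) 4, ← Real.rpow_mul (by norm_num)]
        norm_num
      rw [h800]
      exact Real.rpow_le_rpow (by positivity) hd800 (by norm_num)
    have hsplit2 : d ^ ((61 : ℝ) / 150) = d ^ ((1 : ℝ) / 7) * d ^ ((277 : ℝ) / 1050) := by
      rw [← Real.rpow_add hd0]
      norm_num
    have hmono2 : d ^ ((1 : ℝ) / 4) ≤ d ^ ((277 : ℝ) / 1050) :=
      Real.rpow_le_rpow_of_exponent_le hd1 (by norm_num)
    have hd17_1 : (1 : ℝ) ≤ d ^ ((1 : ℝ) / 7) := by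
      calc (1 : ℝ) = (1 : ℝ) ^ ((1 : ℝ) / 7) := (Real.one_rpow _).symm
        _ ≤ d ^ ((1 : ℝ) / 7) := Real.rpow_le_rpow (by norm_num) hd1 (by norm_num)
    have hfinal : 400 * (d ^ ((1 : ℝ) / 7) + 1) ≤ d ^ ((61 : ℝ) / 150) := by
      rw [hsplit2]
      have h800d : 800 * d ^ ((1 : ℝ) / 7) ≤ d ^ ((1 : ℝ) / 7) * d ^ ((277 : ℝ) / 1050) := by
        have h5 := hd14.trans hmono2
        nlinarith [Real.rpow_pos_of_pos hd0 ((1 : ℝ) / 7)]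
      nlinarith
    have hA : d ^ ((1 : ℝ) / 7) + 1 ≤ lam ^ 2 / (4 * V₀) := by
      rw [heq]
      calc d ^ ((1 : ℝ) / 7) + 1 ≤ d ^ ((61 : ℝ) / 150) / 400 := by
            linarith only [hfinal]
        _ = d ^ ((5 : ℝ) / 12) / (400 * d ^ ((1 : ℝ) / 100)) := hstep2
        _ ≤ d ^ ((5 : ℝ) / 12) / (4 * Real.log d) := hstep1
    have hE2 : -(t * lam) + t ^ 2 * (l.map (fun u => ∑ x : Bool × W, m u x * g u x ^ 2)).sum
        ≤ -(d ^ ((1 : ℝ) / 7)) - 1 := by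
      have h6 : -(t * lam) + t ^ 2 * (l.map (fun u => ∑ x : Bool × W, m u x * g u x ^ 2)).sum
          ≤ -(t * lam) + t ^ 2 * V₀ := by linarith only [h1]
      rw [hE] at h6
      linarith only [h6, hA]
    calc 2 * Real.exp (-(t * lam) +
        t ^ 2 * (l.map (fun u => ∑ x : Bool × W, m u x * g u x ^ 2)).sum)
        ≤ 2 * Real.exp (-(d ^ ((1 : ℝ) / 7)) - 1) :=
          mul_le_mul_of_nonneg_left (Real.exp_le_exp.2 hE2) (by norm_num)
      _ ≤ Real.exp (-(d ^ ((1 : ℝ) / 7))) := by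
          rw [sub_eq_add_neg, Real.exp_add]
          have h2e : 2 * Real.exp (-1) ≤ 1 := by
            have h7 := Real.exp_one_gt_d9
            have h8 : Real.exp (-1 : ℝ) = (Real.exp 1)⁻¹ := by
              rw [← Real.exp_neg]
            rw [h8]
            have h9 : Real.exp 1 * (Real.exp 1)⁻¹ = 1 :=
              mul_inv_cancel₀ (ne_of_gt (Real.exp_pos 1))
            have h10 : (0 : ℝ) ≤ (Real.exp 1)⁻¹ := inv_nonneg.2 (Real.exp_pos 1).le
            calc 2 * (Real.exp 1)⁻¹ ≤ Real.exp 1 * (Real.exp 1)⁻¹ :=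
                  mul_le_mul_of_nonneg_right (by linarith only [h7]) h10
              _ = 1 := h9
          calc 2 * (Real.exp (-(d ^ ((1 : ℝ) / 7))) * Real.exp (-1))
              = 2 * Real.exp (-1) * Real.exp (-(d ^ ((1 : ℝ) / 7))) := by ring
            _ ≤ 1 * Real.exp (-(d ^ ((1 : ℝ) / 7))) :=
                mul_le_mul_of_nonneg_right h2e (Real.exp_nonneg _)
            _ = Real.exp (-(d ^ ((1 : ℝ) / 7))) := one_mul _
  calc prE L p (fun ω => lam <
        |relLostDeg H L d v ω - ex L p (relLostDeg H L d v)|)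
      = ∑ σ : V → Bool × W,
          (if lam < |f σ - Texp m l f x₀| then (∏ u : V, m u (σ u)) else 0) := h_prE
    _ ≤ 2 * Real.exp (-(t * lam) +
          t ^ 2 * (l.map (fun u => ∑ x : Bool × W, m u x * g u x ^ 2)).sum) :=
        ConcAux.tail_bound m h_m0 h_m1 g x₀ b t lam ht0 htb h_gb f h_hf l hlnd hlfull x₀
    _ ≤ Real.exp (-(d ^ ((1 : ℝ) / 7))) := h_num

end MainProof
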